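/- Let m > 0 and let φ̃, ψ̃ : ℝ³ → ℂ be Schwartz functions. Then for every t ∈ ℝ: KG_t(φ^{+1}, ψ^{−1}) = 0; i.e., positive-frequency and negative-frequency solutions of the Klein–Gordon equation are mutually orthogonal with respect to the Klein–Gordon pairing at every time. -/

import Mathlib

open MeasureTheory

noncomputable section

/-- Relativistic energy `ε_p = √(‖p‖² + m²)`. -/
def relEnergy (m : ℝ) (p : EuclideanSpace ℝ (Fin 3)) : ℝ :=
  Real.sqrt (‖p‖ ^ 2 + m ^ 2)

/-- The `σ`-frequency solution of the Klein–Gordon equation with momentum-space profile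
`ψ̃`:  `ψ^σ(t,x) = (2π)^{−3/2} ∫ (2ε_p)⁻¹ e^{i(x·p − σ t ε_p)} ψ̃(p) dp`. -/
def kgSolution (m σ : ℝ) (ψ : SchwartzMap (EuclideanSpace ℝ (Fin 3)) ℂ)
    (t : ℝ) (x : EuclideanSpace ℝ (Fin 3)) : ℂ :=
  (((2 * Real.pi) ^ (-(3 : ℝ) / 2) : ℝ) : ℂ) *
    ∫ p : EuclideanSpace ℝ (Fin 3),
      ((2 * relEnergy m p : ℝ) : ℂ)⁻¹ *
        Complex.exp (Complex.I *
          (((inner ℝ x p : ℝ) : ℂ) - (σ : ℂ) * (t : ℂ) * ((relEnergy m p : ℝ) : ℂ))) *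
        ψ p

/-- The Klein–Gordon pairing at time `t`:
`KG_t(φ,ψ) = i ∫ [conj(φ(t,x))·∂_tψ(t,x) − conj(∂_tφ(t,x))·ψ(t,x)] dx`. -/
def kgPairing (φ ψ : ℝ → EuclideanSpace ℝ (Fin 3) → ℂ) (t : ℝ) : ℂ :=
  Complex.I * ∫ x : EuclideanSpace ℝ (Fin 3),
    (starRingEnd ℂ (φ t x) * deriv (fun t' => ψ t' x) t -
      starRingEnd ℂ (deriv (fun t' => φ t' x) t) * ψ t x)

open MeasureTheory Set Real
open scoped FourierTransform

local notation "E3" => EuclideanSpace ℝ (Fin 3)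



section TGLib

variable {E F G H : Type*} [NormedAddCommGroup E] [NormedSpace ℝ E]
  [NormedAddCommGroup F] [NormedSpace ℝ F] [NormedAddCommGroup G] [NormedSpace ℝ G]
  [NormedAddCommGroup H] [NormedSpace ℝ H]

private lemma one_le_one_add_norm (x : E) : (1:ℝ) ≤ 1 + ‖x‖ := by
  have := norm_nonneg x; linarith

lemma htg_bilin (B : F →L[ℝ] G →L[ℝ] H) {f : E → F} {g : E → G}
    (hf : Function.HasTemperateGrowth f) (hg : Function.HasTemperateGrowth g) :
    Function.HasTemperateGrowth (fun x => B (f x) (g x)) := by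
  refine ⟨(B.isBoundedBilinearMap.contDiff).comp (hf.1.prodMk hg.1), fun n => ?_⟩
  obtain ⟨k1, C1, hC1, h1⟩ := hf.norm_iteratedFDeriv_le_uniform n
  obtain ⟨k2, C2, hC2, h2⟩ := hg.norm_iteratedFDeriv_le_uniform n
  refine ⟨k1 + k2, ‖B‖ * 2 ^ n * (C1 * C2), fun x => ?_⟩
  have key := B.norm_iteratedFDeriv_le_of_bilinear hf.1 hg.1 x (n := n) (mod_cast le_top)
  refine key.trans ?_
  have step : ∑ i ∈ Finset.range (n + 1),
      (n.choose i : ℝ) * ‖iteratedFDeriv ℝ i f x‖ * ‖iteratedFDeriv ℝ (n - i) g x‖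
      ≤ ∑ i ∈ Finset.range (n + 1),
      (n.choose i : ℝ) * (C1 * (1 + ‖x‖) ^ k1) * (C2 * (1 + ‖x‖) ^ k2) := by
    apply Finset.sum_le_sum
    intro i hi
    rw [Finset.mem_range_succ_iff] at hi
    have := h1 i hi x
    have := h2 (n - i) (Nat.sub_le n i) x
    have hnn : (0:ℝ) ≤ (n.choose i : ℝ) * ‖iteratedFDeriv ℝ i f x‖ := by positivity
    calc (n.choose i : ℝ) * ‖iteratedFDeriv ℝ i f x‖ * ‖iteratedFDeriv ℝ (n - i) g x‖
        ≤ (n.choose i : ℝ) * ‖iteratedFDeriv ℝ i f x‖ * (C2 * (1 + ‖x‖) ^ k2) := by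
          apply mul_le_mul_of_nonneg_left (h2 (n - i) (Nat.sub_le n i) x) hnn
      _ ≤ (n.choose i : ℝ) * (C1 * (1 + ‖x‖) ^ k1) * (C2 * (1 + ‖x‖) ^ k2) := by
          have : (0:ℝ) ≤ C2 * (1 + ‖x‖) ^ k2 := by positivity
          apply mul_le_mul_of_nonneg_right _ this
          exact mul_le_mul_of_nonneg_left (h1 i hi x) (by positivity)
  have sumeq : ∑ i ∈ Finset.range (n + 1),
      (n.choose i : ℝ) * (C1 * (1 + ‖x‖) ^ k1) * (C2 * (1 + ‖x‖) ^ k2)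
      = (2:ℝ) ^ n * ((C1 * (1 + ‖x‖) ^ k1) * (C2 * (1 + ‖x‖) ^ k2)) := by
    simp only [mul_assoc, ← Finset.sum_mul]
    congr 1
    have := Nat.sum_range_choose n
    exact_mod_cast congrArg (Nat.cast : ℕ → ℝ) this
  calc ‖B‖ * ∑ i ∈ Finset.range (n + 1),
      (n.choose i : ℝ) * ‖iteratedFDeriv ℝ i f x‖ * ‖iteratedFDeriv ℝ (n - i) g x‖
      ≤ ‖B‖ * ((2:ℝ) ^ n * ((C1 * (1 + ‖x‖) ^ k1) * (C2 * (1 + ‖x‖) ^ k2))) := by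
        rw [← sumeq]; exact mul_le_mul_of_nonneg_left step (norm_nonneg B)
    _ = ‖B‖ * 2 ^ n * (C1 * C2) * (1 + ‖x‖) ^ (k1 + k2) := by rw [pow_add]; ring

lemma htg_mul {f g : E → ℂ} (hf : Function.HasTemperateGrowth f)
    (hg : Function.HasTemperateGrowth g) :
    Function.HasTemperateGrowth (fun x => f x * g x) := by
  have := htg_bilin (ContinuousLinearMap.mul ℝ ℂ) hf hg
  simpa using this

lemma htg_mul_real {f g : E → ℝ} (hf : Function.HasTemperateGrowth f)
    (hg : Function.HasTemperateGrowth g) :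
    Function.HasTemperateGrowth (fun x => f x * g x) := by
  have := htg_bilin (ContinuousLinearMap.mul ℝ ℝ) hf hg
  simpa using this

lemma htg_add {f g : E → F} (hf : Function.HasTemperateGrowth f)
    (hg : Function.HasTemperateGrowth g) :
    Function.HasTemperateGrowth (fun x => f x + g x) := by
  refine ⟨hf.1.add hg.1, fun n => ?_⟩
  obtain ⟨k1, C1, hC1, h1⟩ := hf.norm_iteratedFDeriv_le_uniform n
  obtain ⟨k2, C2, hC2, h2⟩ := hg.norm_iteratedFDeriv_le_uniform n
  refine ⟨max k1 k2, C1 + C2, fun x => ?_⟩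
  have hone : (1:ℝ) ≤ 1 + ‖x‖ := one_le_one_add_norm x
  have e : iteratedFDeriv ℝ n (fun x => f x + g x) x
      = iteratedFDeriv ℝ n f x + iteratedFDeriv ℝ n g x := by
    exact iteratedFDeriv_add_apply (hf.1.contDiffAt.of_le (by exact_mod_cast le_top)) (hg.1.contDiffAt.of_le (by exact_mod_cast le_top))
  rw [e]
  calc ‖iteratedFDeriv ℝ n f x + iteratedFDeriv ℝ n g x‖
      ≤ ‖iteratedFDeriv ℝ n f x‖ + ‖iteratedFDeriv ℝ n g x‖ := norm_add_le _ _
    _ ≤ C1 * (1 + ‖x‖) ^ k1 + C2 * (1 + ‖x‖) ^ k2 := add_le_add (h1 n le_rfl x) (h2 n le_rfl x)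
    _ ≤ C1 * (1 + ‖x‖) ^ max k1 k2 + C2 * (1 + ‖x‖) ^ max k1 k2 := by
        gcongr <;> [exact le_max_left _ _; exact le_max_right _ _]
    _ = (C1 + C2) * (1 + ‖x‖) ^ max k1 k2 := by ring

lemma htg_comp {g : F → G} {f : E → F} (hg : Function.HasTemperateGrowth g)
    (hf : Function.HasTemperateGrowth f) :
    Function.HasTemperateGrowth (g ∘ f) := by
  refine ⟨hg.1.comp hf.1, fun n => ?_⟩
  obtain ⟨kg, Cg, hCg, hhg⟩ := hg.norm_iteratedFDeriv_le_uniform n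
  obtain ⟨kf, Cf, hCf, hhf⟩ := hf.norm_iteratedFDeriv_le_uniform n
  refine ⟨kf * kg + kf * n, n.factorial * Cg * (1 + Cf) ^ (kg + n), fun x => ?_⟩
  have hone : (1:ℝ) ≤ 1 + ‖x‖ := one_le_one_add_norm x
  have hfx : ‖f x‖ ≤ Cf * (1 + ‖x‖) ^ kf := by simpa using hhf 0 (Nat.zero_le n) x
  set D : ℝ := 1 + Cf * (1 + ‖x‖) ^ kf with hDdef
  have hD1 : (1:ℝ) ≤ D := by
    have : (0:ℝ) ≤ Cf * (1 + ‖x‖) ^ kf := by positivity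
    simp only [hDdef]; linarith
  have key := norm_iteratedFDeriv_comp_le hg.1 hf.1 (n := n)
    (mod_cast le_top) x (C := Cg * (1 + ‖f x‖) ^ kg) (D := D)
    (fun i hi => hhg i hi (f x))
    (fun i h1i hin => by
      calc ‖iteratedFDeriv ℝ i f x‖ ≤ Cf * (1 + ‖x‖) ^ kf := hhf i hin x
        _ ≤ D := by simp only [hDdef]; linarith
        _ ≤ D ^ i := le_self_pow₀ hD1 (by omega))
  refine key.trans ?_
  have hE : (1:ℝ) + ‖f x‖ ≤ (1 + Cf) * (1 + ‖x‖) ^ kf := by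
    have h1 : (1:ℝ) ≤ (1 + ‖x‖) ^ kf := one_le_pow₀ hone
    nlinarith [hfx]
  have hD : D ≤ (1 + Cf) * (1 + ‖x‖) ^ kf := by
    have h1 : (1:ℝ) ≤ (1 + ‖x‖) ^ kf := one_le_pow₀ hone
    simp only [hDdef]; nlinarith
  have hpos1 : (0:ℝ) ≤ (1:ℝ) + ‖f x‖ := by positivity
  calc (n.factorial : ℝ) * (Cg * (1 + ‖f x‖) ^ kg) * D ^ n
      ≤ (n.factorial : ℝ) * (Cg * ((1 + Cf) * (1 + ‖x‖) ^ kf) ^ kg)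
          * ((1 + Cf) * (1 + ‖x‖) ^ kf) ^ n := by
        have hD0 : (0:ℝ) ≤ D := by linarith
        gcongr <;> first
          | exact hE
          | exact hD
          | positivity
          | linarith
    _ = (n.factorial : ℝ) * Cg * (1 + Cf) ^ (kg + n) * (1 + ‖x‖) ^ (kf * kg + kf * n) := by
        rw [mul_pow, mul_pow, ← pow_mul, ← pow_mul, pow_add, pow_add]; ring

end TGLib


section TGLib2

variable {E : Type*} [NormedAddCommGroup E] [NormedSpace ℝ E]

lemma iteratedDerivWithin_rpow (s : ℝ) (n : ℕ) :
    ∀ x ∈ Set.Ioi (0:ℝ), iteratedDerivWithin n (fun r : ℝ => r ^ s) (Set.Ioi 0) x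
      = (∏ i ∈ Finset.range n, (s - i)) * x ^ (s - n) := by
  induction n with
  | zero => intro x hx; simp
  | succ n ih =>
    intro x hx
    have hx0 : (0:ℝ) < x := hx
    rw [iteratedDerivWithin_succ]
    have hcongr : derivWithin (iteratedDerivWithin n (fun r : ℝ => r ^ s) (Set.Ioi 0))
        (Set.Ioi 0) x
        = derivWithin (fun r : ℝ => (∏ i ∈ Finset.range n, (s - i)) * r ^ (s - n))
          (Set.Ioi 0) x :=
      derivWithin_congr (fun y hy => ih y hy) (ih x hx)
    rw [hcongr, derivWithin_of_isOpen isOpen_Ioi hx]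
    have hd : HasDerivAt (fun r : ℝ => (∏ i ∈ Finset.range n, (s - i)) * r ^ (s - n))
        ((∏ i ∈ Finset.range n, (s - i)) * ((s - n) * x ^ (s - n - 1))) x :=
      (Real.hasDerivAt_rpow_const (Or.inl hx0.ne')).const_mul _
    rw [hd.deriv, Finset.prod_range_succ]
    have : s - (n + 1 : ℕ) = s - n - 1 := by push_cast; ring
    rw [this]; ring

lemma htg_rpow_comp {f : E → ℝ} (hf : Function.HasTemperateGrowth f) {a s : ℝ}
    (ha : 0 < a) (hs : s ≤ 1) (hfa : ∀ x, a ≤ f x) :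
    Function.HasTemperateGrowth (fun x => f x ^ s) := by
  have hfpos : ∀ x, 0 < f x := fun x => lt_of_lt_of_le ha (hfa x)
  constructor
  · rw [contDiff_iff_contDiffAt]
    intro x
    exact (Real.contDiffAt_rpow_const_of_ne (hfpos x).ne').comp x hf.1.contDiffAt
  intro n
  obtain ⟨kf, Cf, hCf, hhf⟩ := hf.norm_iteratedFDeriv_le_uniform n
  set A : ℝ := ∑ i ∈ Finset.range (n+1), |∏ j ∈ Finset.range i, (s - j)| * (a ^ (s - i) + 1)
    with hAdef
  set Bc : ℝ := ∑ i ∈ Finset.range (n+1), |∏ j ∈ Finset.range i, (s - j)| with hBdef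
  have hA0 : 0 ≤ A := Finset.sum_nonneg (fun i _ => by positivity)
  have hB0 : 0 ≤ Bc := Finset.sum_nonneg (fun i _ => by positivity)
  refine ⟨kf + kf * n, n.factorial * (A + Bc * Cf) * (1 + Cf) ^ n, fun x => ?_⟩
  have hone : (1:ℝ) ≤ 1 + ‖x‖ := by have := norm_nonneg x; linarith
  have honep : (1:ℝ) ≤ (1 + ‖x‖) ^ kf := one_le_pow₀ hone
  have hfx : ‖f x‖ ≤ Cf * (1 + ‖x‖) ^ kf := by simpa using hhf 0 (Nat.zero_le n) x
  have hfx' : f x ≤ Cf * (1 + ‖x‖) ^ kf := (le_abs_self _).trans (by rwa [← Real.norm_eq_abs])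
  set D : ℝ := 1 + Cf * (1 + ‖x‖) ^ kf with hDdef
  have hD1 : (1:ℝ) ≤ D := by
    have : (0:ℝ) ≤ Cf * (1 + ‖x‖) ^ kf := by positivity
    simp only [hDdef]; linarith
  -- smoothness of rpow on Ioi 0
  have hgc : ContDiffOn ℝ (n : WithTop ℕ∞) (fun r : ℝ => r ^ s) (Set.Ioi 0) := fun r hr =>
    (Real.contDiffAt_rpow_const_of_ne (ne_of_gt hr)).contDiffWithinAt
  -- the C bound for the outer function at f x
  have hC : ∀ i, i ≤ n → ‖iteratedFDerivWithin ℝ i (fun r : ℝ => r ^ s) (Set.Ioi 0) (f x)‖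
      ≤ A + Bc * (Cf * (1 + ‖x‖) ^ kf) := by
    intro i hi
    rw [norm_iteratedFDerivWithin_eq_norm_iteratedDerivWithin,
      iteratedDerivWithin_rpow s i (f x) (hfpos x)]
    have hrpow : (f x) ^ (s - i) ≤ a ^ (s - i) + 1 + f x := by
      rcases le_or_gt (s - i) 0 with hsi | hsi
      · have := Real.rpow_le_rpow_of_nonpos ha (hfa x) hsi
        have h2 : (0:ℝ) < f x := hfpos x
        linarith
      · have hsi1 : s - i ≤ 1 := by
          have : (0:ℝ) ≤ i := Nat.cast_nonneg i
          linarith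
        rcases le_or_gt (f x) 1 with hf1 | hf1
        · have := Real.rpow_le_one (hfpos x).le hf1 hsi.le
          have h2 : (0:ℝ) < f x := hfpos x
          have h3 : (0:ℝ) < a ^ (s - i) := Real.rpow_pos_of_pos ha _
          linarith
        · have := Real.rpow_le_rpow_of_exponent_le hf1.le hsi1
          rw [Real.rpow_one] at this
          have h3 : (0:ℝ) < a ^ (s - i) := Real.rpow_pos_of_pos ha _
          linarith
    have habs : ‖(∏ j ∈ Finset.range i, (s - j)) * (f x) ^ (s - i)‖
        = |∏ j ∈ Finset.range i, (s - j)| * (f x) ^ (s - i) := by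
      rw [Real.norm_eq_abs, abs_mul, abs_of_pos (Real.rpow_pos_of_pos (hfpos x) _)]
    rw [habs]
    have hterm : |∏ j ∈ Finset.range i, (s - j)| * (f x) ^ (s - i)
        ≤ |∏ j ∈ Finset.range i, (s - j)| * (a ^ (s - i) + 1) +
          |∏ j ∈ Finset.range i, (s - j)| * f x := by
      have h0 : (0:ℝ) ≤ |∏ j ∈ Finset.range i, (s - j)| := abs_nonneg _
      nlinarith [hrpow]
    refine hterm.trans (add_le_add ?_ ?_)
    · refine Finset.single_le_sum (f := fun i => |∏ j ∈ Finset.range i, (s - j)| * (a ^ (s - i) + 1))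
        (fun j _ => by positivity) (Finset.mem_range_succ_iff.mpr hi)
    · have h1 : |∏ j ∈ Finset.range i, (s - j)| ≤ Bc :=
        Finset.single_le_sum (f := fun i => |∏ j ∈ Finset.range i, (s - j)|)
          (fun j _ => abs_nonneg _) (Finset.mem_range_succ_iff.mpr hi)
      have h2 : (0:ℝ) ≤ Cf * (1 + ‖x‖) ^ kf := by positivity
      have h3 : 0 ≤ f x := (hfpos x).le
      calc |∏ j ∈ Finset.range i, (s - j)| * f x ≤ Bc * f x :=
            mul_le_mul_of_nonneg_right h1 h3
        _ ≤ Bc * (Cf * (1 + ‖x‖) ^ kf) := mul_le_mul_of_nonneg_left hfx' hB0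
  have key := norm_iteratedFDerivWithin_comp_le (g := fun r : ℝ => r ^ s) (f := f)
    (s := (Set.univ : Set E)) (t := Set.Ioi 0) hgc (hf.1.of_le (mod_cast le_top)).contDiffOn
    le_rfl (isOpen_Ioi.uniqueDiffOn) uniqueDiffOn_univ
    (fun y _ => hfpos y) (Set.mem_univ x)
    (C := A + Bc * (Cf * (1 + ‖x‖) ^ kf)) (D := D) hC
    (fun i h1i hin => by
      rw [iteratedFDerivWithin_univ]
      calc ‖iteratedFDeriv ℝ i f x‖ ≤ Cf * (1 + ‖x‖) ^ kf := hhf i hin x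
        _ ≤ D := by simp only [hDdef]; linarith
        _ ≤ D ^ i := le_self_pow₀ hD1 (by omega))
  rw [iteratedFDerivWithin_univ] at key
  have hfun : ((fun r : ℝ => r ^ s) ∘ f) = (fun x => f x ^ s) := rfl
  rw [hfun] at key
  refine key.trans ?_
  have hCx : A + Bc * (Cf * (1 + ‖x‖) ^ kf) ≤ (A + Bc * Cf) * (1 + ‖x‖) ^ kf := by
    nlinarith [hA0, hB0, hCf, honep]
  have hDx : D ≤ (1 + Cf) * (1 + ‖x‖) ^ kf := by
    simp only [hDdef]; nlinarith
  have hD0 : (0:ℝ) ≤ D := by linarith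
  calc (n.factorial : ℝ) * (A + Bc * (Cf * (1 + ‖x‖) ^ kf)) * D ^ n
      ≤ (n.factorial : ℝ) * ((A + Bc * Cf) * (1 + ‖x‖) ^ kf)
        * ((1 + Cf) * (1 + ‖x‖) ^ kf) ^ n := by gcongr
    _ = (n.factorial : ℝ) * (A + Bc * Cf) * (1 + Cf) ^ n * (1 + ‖x‖) ^ (kf + kf * n) := by
        rw [mul_pow, ← pow_mul, pow_add]; ring

lemma htg_expI : Function.HasTemperateGrowth (fun θ : ℝ => Complex.exp (θ * Complex.I)) := by
  have hsm : ContDiff ℝ (⊤ : ℕ∞) (fun θ : ℝ => Complex.exp (θ * Complex.I)) := by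
    have h1 : ContDiff ℝ (⊤ : ℕ∞) (fun θ : ℝ => (θ : ℂ) * Complex.I) :=
      (Complex.ofRealCLM.contDiff.of_le le_top).mul contDiff_const
    exact ((Complex.contDiff_exp (𝕜 := ℂ)).restrict_scalars ℝ).comp h1
  have hderiv : ∀ n : ℕ, iteratedDeriv n (fun θ : ℝ => Complex.exp (θ * Complex.I))
      = fun θ : ℝ => Complex.I ^ n * Complex.exp (θ * Complex.I) := by
    intro n
    induction n with
    | zero => simp
    | succ n ih =>
      rw [iteratedDeriv_succ, ih]
      funext θ
      have hd : HasDerivAt (fun θ : ℝ => Complex.exp (θ * Complex.I))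
          (Complex.exp (θ * Complex.I) * Complex.I) θ := by
        have h0 : HasDerivAt (fun θ : ℝ => (θ : ℂ)) 1 θ := by
          simpa using (hasDerivAt_id θ).ofReal_comp
        simpa using (h0.mul_const Complex.I).cexp
      rw [deriv_const_mul _ hd.differentiableAt, hd.deriv]
      ring
  refine ⟨hsm, fun n => ⟨0, 1, fun θ => ?_⟩⟩
  rw [norm_iteratedFDeriv_eq_norm_iteratedDeriv, hderiv n]
  simp only [norm_mul, norm_pow, Complex.norm_I, one_pow, one_mul, pow_zero, mul_one]
  rw [Complex.norm_exp]
  simp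

end TGLib2

section Concrete

variable {m : ℝ}

lemma htg_normsq : Function.HasTemperateGrowth (fun p : E3 => ‖p‖ ^ 2 + m ^ 2) := by
  have h1 : Function.HasTemperateGrowth (fun p : E3 => (innerSL ℝ p) p) := by
    have hid : Function.HasTemperateGrowth (fun p : E3 => p) := by
      exact Function.HasTemperateGrowth.id'
    exact htg_bilin (innerSL ℝ) hid hid
  have h2 : (fun p : E3 => (innerSL ℝ p) p) = fun p : E3 => ‖p‖ ^ 2 := by
    funext p; exact real_inner_self_eq_norm_sq p
  rw [h2] at h1
  exact htg_add h1 (Function.HasTemperateGrowth.const _)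

lemma normsq_ge (p : E3) : m ^ 2 ≤ ‖p‖ ^ 2 + m ^ 2 := by nlinarith [norm_nonneg p, sq_nonneg ‖p‖]

lemma relEnergy_pos (hm : 0 < m) (p : E3) : 0 < relEnergy m p := by
  apply Real.sqrt_pos.mpr; nlinarith [sq_nonneg ‖p‖]

lemma relEnergy_ge (hm : 0 < m) (p : E3) : m ≤ relEnergy m p := by
  have h := Real.sqrt_le_sqrt (normsq_ge (m := m) p)
  rwa [Real.sqrt_sq hm.le] at h

lemma htg_relEnergy (hm : 0 < m) : Function.HasTemperateGrowth (relEnergy m) := by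
  have h := htg_rpow_comp (htg_normsq (m := m)) (a := m ^ 2) (s := 1/2)
    (by positivity) (by norm_num) (normsq_ge)
  have : (fun p : E3 => (‖p‖ ^ 2 + m ^ 2) ^ (1/2 : ℝ)) = relEnergy m := by
    funext p; rw [relEnergy, Real.sqrt_eq_rpow]
  rwa [this] at h

lemma htg_inv_two_relEnergy (hm : 0 < m) :
    Function.HasTemperateGrowth (fun p : E3 => (2 * relEnergy m p)⁻¹) := by
  have h := htg_rpow_comp (htg_normsq (m := m)) (a := m ^ 2) (s := -(1/2))
    (by positivity) (by norm_num) (normsq_ge)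
  have h2 := htg_mul_real (Function.HasTemperateGrowth.const (2⁻¹ : ℝ)) h
  have : (fun p : E3 => (2⁻¹ : ℝ) * (‖p‖ ^ 2 + m ^ 2) ^ (-(1/2) : ℝ))
      = fun p : E3 => (2 * relEnergy m p)⁻¹ := by
    funext p
    have hq : (0:ℝ) ≤ ‖p‖ ^ 2 + m ^ 2 := by positivity
    rw [relEnergy, Real.sqrt_eq_rpow, Real.rpow_neg hq, mul_inv]
  rwa [this] at h2

lemma htg_phase (hm : 0 < m) (τ : ℝ) :
    Function.HasTemperateGrowth (fun p : E3 =>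
      Complex.exp ((τ * relEnergy m p : ℝ) * Complex.I)) := by
  have harg : Function.HasTemperateGrowth (fun p : E3 => τ * relEnergy m p) :=
    htg_mul_real (Function.HasTemperateGrowth.const τ) (htg_relEnergy hm)
  have h := htg_comp htg_expI harg
  exact h

lemma htg_Msol (hm : 0 < m) (σ : ℝ) :
    Function.HasTemperateGrowth (fun p : E3 =>
      ((2 * relEnergy m p : ℝ) : ℂ)⁻¹ *
        Complex.exp ((σ * relEnergy m p : ℝ) * Complex.I)) := by
  refine htg_mul ?_ (htg_phase hm σ)
  have h := htg_comp Complex.ofRealCLM.hasTemperateGrowth (htg_inv_two_relEnergy hm)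
  have : (⇑Complex.ofRealCLM ∘ fun p : E3 => (2 * relEnergy m p)⁻¹)
      = fun p : E3 => ((2 * relEnergy m p : ℝ) : ℂ)⁻¹ := by
    funext p; simp [Function.comp, Complex.ofReal_inv]
  rwa [this] at h

lemma htg_Mder (hm : 0 < m) (c : ℂ) (σ : ℝ) :
    Function.HasTemperateGrowth (fun p : E3 =>
      c * Complex.exp ((σ * relEnergy m p : ℝ) * Complex.I)) :=
  htg_mul (Function.HasTemperateGrowth.const c) (htg_phase hm σ)

end Concrete


lemma htg_scale : Function.HasTemperateGrowth (fun v : E3 => (2 * π : ℝ) • v) := by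
  have h := ((2 * π : ℝ) • ContinuousLinearMap.id ℝ E3).hasTemperateGrowth
  convert h using 1
  funext v; simp

lemma antilip_scale : AntilipschitzWith ((2 * π : ℝ)⁻¹.toNNReal)
    (fun v : E3 => (2 * π : ℝ) • v) := by
  apply AntilipschitzWith.of_le_mul_dist
  intro x y
  have h2π : (0:ℝ) < 2 * π := by positivity
  rw [dist_smul₀]
  rw [Real.coe_toNNReal _ (by positivity)]
  rw [Real.norm_eq_abs, abs_of_pos h2π]
  rw [← mul_assoc, inv_mul_cancel₀ h2π.ne', one_mul]

def scaleS : SchwartzMap E3 ℂ →L[ℝ] SchwartzMap E3 ℂ :=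
  SchwartzMap.compCLMOfAntilipschitz ℝ htg_scale antilip_scale

lemma scaleS_apply (f : SchwartzMap E3 ℂ) (v : E3) : scaleS f v = f ((2 * π : ℝ) • v) := rfl

def invFT (f : SchwartzMap E3 ℂ) : SchwartzMap E3 ℂ :=
  (FourierTransform.fourierCLE ℂ (SchwartzMap E3 ℂ)).symm (scaleS f)

lemma rep (f : SchwartzMap E3 ℂ) (x : E3) :
    ∫ p : E3, Complex.exp ((inner ℝ x p : ℝ) * Complex.I) * f p
      = (((2 * π : ℝ) ^ 3 : ℝ) : ℂ) * invFT f x := by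
  have h2π : (0:ℝ) < 2 * π := by positivity
  have h1 : (invFT f : E3 → ℂ) x = 𝓕⁻ (⇑(scaleS f)) x := by
    simp [invFT, SchwartzMap.fourierInv_coe]
  rw [h1, Real.fourierInv_eq']
  have hcov := MeasureTheory.Measure.integral_comp_smul (volume : Measure E3)
    (fun p : E3 => Complex.exp ((inner ℝ x p : ℝ) * Complex.I) * f p) (2 * π : ℝ)
  rw [finrank_euclideanSpace_fin] at hcov
  have habs : |(((2 * π : ℝ)) ^ 3)⁻¹| = (((2 * π : ℝ)) ^ 3)⁻¹ := by
    rw [abs_of_pos]; positivity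
  rw [habs] at hcov
  have hint : ∀ v : E3, Complex.exp ((inner ℝ x ((2 * π : ℝ) • v) : ℝ) * Complex.I) *
      f ((2 * π : ℝ) • v)
      = Complex.exp (((2 * π * (inner ℝ v x : ℝ) : ℝ) : ℂ) * Complex.I) • (scaleS f v) := by
    intro v
    rw [scaleS_apply, smul_eq_mul]
    have h3 : (inner ℝ x ((2 * π : ℝ) • v) : ℝ) = 2 * π * (inner ℝ v x : ℝ) := by
      rw [real_inner_smul_right, real_inner_comm]
    rw [h3]
  calc ∫ p : E3, Complex.exp ((inner ℝ x p : ℝ) * Complex.I) * f p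
      = ((2 * π : ℝ) ^ 3 : ℝ) • ∫ v : E3,
          Complex.exp ((inner ℝ x ((2 * π : ℝ) • v) : ℝ) * Complex.I) * f ((2 * π : ℝ) • v) := by
        rw [hcov, smul_smul]
        rw [mul_inv_cancel₀ (by positivity), one_smul]
    _ = (((2 * π : ℝ) ^ 3 : ℝ) : ℂ) * ∫ v : E3,
          Complex.exp (((2 * π * (inner ℝ v x : ℝ) : ℝ) : ℂ) * Complex.I) • (scaleS f v) := by
        rw [Complex.real_smul]
        congr 1
        exact congrArg _ (funext hint)
    _ = _ := rfl


def kgC : ℝ := (2 * π) ^ (-(3:ℝ)/2)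

lemma kgC_mul : (kgC * ((2 * π) ^ 3 * kgC) : ℝ) = 1 := by
  have h2π : (0:ℝ) < 2 * π := by positivity
  have h3 : ((2 * π : ℝ)) ^ (3:ℕ) = (2 * π : ℝ) ^ ((3:ℕ):ℝ) := (Real.rpow_natCast _ 3).symm
  rw [kgC, h3, ← Real.rpow_add h2π, ← Real.rpow_add h2π]
  norm_num

lemma keyFubini (F G : SchwartzMap E3 ℂ) :
    ∫ x : E3, (starRingEnd ℂ) ((kgC : ℂ) * ∫ p : E3,
        Complex.exp ((inner ℝ x p : ℝ) * Complex.I) * F p)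
      * ((kgC : ℂ) * ∫ p : E3, Complex.exp ((inner ℝ x p : ℝ) * Complex.I) * G p)
      = ∫ p : E3, (starRingEnd ℂ) (F p) * G p := by
  have h2π : (0:ℝ) < 2 * π := by positivity
  set SG := invFT G with hSGdef
  have hg : ∀ x : E3, (kgC : ℂ) * ∫ p : E3, Complex.exp ((inner ℝ x p : ℝ) * Complex.I) * G p
      = ((((2 * π : ℝ) ^ 3 : ℝ) : ℂ) * (kgC : ℂ)) * SG x := by
    intro x; rw [rep]; ring
  have hconj : ∀ x : E3, (starRingEnd ℂ) ((kgC : ℂ) * ∫ p : E3,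
      Complex.exp ((inner ℝ x p : ℝ) * Complex.I) * F p)
      = (kgC : ℂ) * ∫ p : E3, Complex.exp (-((inner ℝ x p : ℝ) : ℂ) * Complex.I)
          * (starRingEnd ℂ) (F p) := by
    intro x
    rw [map_mul, Complex.conj_ofReal, ← integral_conj]
    congr 1
    refine congrArg _ (funext fun p => ?_)
    rw [map_mul, ← Complex.exp_conj]
    congr 1
    simp [Complex.conj_I]
  have hpoint : ∀ x : E3, (starRingEnd ℂ) ((kgC : ℂ) * ∫ p : E3,
        Complex.exp ((inner ℝ x p : ℝ) * Complex.I) * F p)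
      * ((kgC : ℂ) * ∫ p : E3, Complex.exp ((inner ℝ x p : ℝ) * Complex.I) * G p)
      = ((kgC : ℂ) * ((((2 * π : ℝ) ^ 3 : ℝ) : ℂ) * (kgC : ℂ)))
        * ∫ p : E3, (Complex.exp (-((inner ℝ x p : ℝ) : ℂ) * Complex.I)
            * (starRingEnd ℂ) (F p)) * SG x := by
    intro x
    rw [hconj x, hg x]
    have hre : ((kgC : ℂ) * ∫ p : E3, Complex.exp (-((inner ℝ x p : ℝ) : ℂ) * Complex.I)
          * (starRingEnd ℂ) (F p)) * ((((2 * π : ℝ) ^ 3 : ℝ) : ℂ) * (kgC : ℂ) * SG x)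
        = ((kgC : ℂ) * ((((2 * π : ℝ) ^ 3 : ℝ) : ℂ) * (kgC : ℂ)))
          * ((∫ p : E3, Complex.exp (-((inner ℝ x p : ℝ) : ℂ) * Complex.I)
            * (starRingEnd ℂ) (F p)) * SG x) := by ring
    rw [hre, ← integral_mul_const]
  rw [show (fun x : E3 => (starRingEnd ℂ) ((kgC : ℂ) * ∫ p : E3,
        Complex.exp ((inner ℝ x p : ℝ) * Complex.I) * F p)
      * ((kgC : ℂ) * ∫ p : E3, Complex.exp ((inner ℝ x p : ℝ) * Complex.I) * G p))
      = fun x : E3 => ((kgC : ℂ) * ((((2 * π : ℝ) ^ 3 : ℝ) : ℂ) * (kgC : ℂ)))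
        * ∫ p : E3, (Complex.exp (-((inner ℝ x p : ℝ) : ℂ) * Complex.I)
            * (starRingEnd ℂ) (F p)) * SG x from funext hpoint]
  rw [integral_const_mul]
  have hcont : Continuous (fun z : E3 × E3 => (Complex.exp (-((inner ℝ z.1 z.2 : ℝ) : ℂ)
      * Complex.I) * (starRingEnd ℂ) (F z.2)) * SG z.1) := by
    have c1 : Continuous fun z : E3 × E3 => (inner ℝ z.1 z.2 : ℝ) := continuous_inner
    have c2 : Continuous fun z : E3 × E3 => Complex.exp (-((inner ℝ z.1 z.2 : ℝ) : ℂ)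
        * Complex.I) :=
      Complex.continuous_exp.comp (((Complex.continuous_ofReal.comp c1).neg).mul
        continuous_const)
    have c3 : Continuous fun z : E3 × E3 => (starRingEnd ℂ) (F z.2) :=
      continuous_star.comp (F.continuous.comp continuous_snd)
    exact (c2.mul c3).mul (SG.continuous.comp continuous_fst)
  have hbound : Integrable (fun z : E3 × E3 => ‖SG z.1‖ * ‖F z.2‖)
      ((volume : Measure E3).prod (volume : Measure E3)) :=
    (SG.integrable (μ := volume)).norm.mul_prod (F.integrable (μ := volume)).norm
  have hΦint : Integrable (fun z : E3 × E3 => (Complex.exp (-((inner ℝ z.1 z.2 : ℝ) : ℂ)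
      * Complex.I) * (starRingEnd ℂ) (F z.2)) * SG z.1)
      ((volume : Measure E3).prod (volume : Measure E3)) := by
    refine hbound.mono' hcont.aestronglyMeasurable ?_
    refine Filter.Eventually.of_forall fun z => ?_
    have hnorm : ‖Complex.exp (-((inner ℝ z.1 z.2 : ℝ) : ℂ) * Complex.I)‖ = 1 := by
      rw [Complex.norm_exp]
      simp
    rw [norm_mul, norm_mul, hnorm, one_mul, RCLike.norm_conj]
    exact le_of_eq (mul_comm _ _)
  have hswapped := integral_integral_swap (f := fun x p : E3 =>
    (Complex.exp (-((inner ℝ x p : ℝ) : ℂ) * Complex.I) * (starRingEnd ℂ) (F p)) * SG x) hΦint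
  rw [hswapped]
  have hFT : ∀ p : E3, (∫ x : E3, (Complex.exp (-((inner ℝ x p : ℝ) : ℂ) * Complex.I)
      * (starRingEnd ℂ) (F p)) * SG x) = (starRingEnd ℂ) (F p) * G p := by
    intro p
    have step1 : (∫ x : E3, (Complex.exp (-((inner ℝ x p : ℝ) : ℂ) * Complex.I)
        * (starRingEnd ℂ) (F p)) * SG x)
        = (starRingEnd ℂ) (F p) * ∫ x : E3,
            Complex.exp (-((inner ℝ x p : ℝ) : ℂ) * Complex.I) * SG x := by
      rw [← integral_const_mul]
      refine congrArg _ (funext fun x => ?_)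
      ring
    rw [step1]
    have step2 : (∫ x : E3, Complex.exp (-((inner ℝ x p : ℝ) : ℂ) * Complex.I) * SG x)
        = 𝓕 (⇑SG) ((2 * π : ℝ)⁻¹ • p) := by
      rw [Real.fourier_eq']
      refine congrArg _ (funext fun x => ?_)
      rw [smul_eq_mul]
      have h5 : ((-2 * π * (inner ℝ x ((2 * π : ℝ)⁻¹ • p) : ℝ) : ℝ) : ℂ)
          = -((inner ℝ x p : ℝ) : ℂ) := by
        have h6 : (-2 * π * (inner ℝ x ((2 * π : ℝ)⁻¹ • p) : ℝ) : ℝ) = -(inner ℝ x p : ℝ) := by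
          rw [real_inner_smul_right]
          field_simp
        rw [h6, Complex.ofReal_neg]
      rw [h5]
    rw [step2]
    have step3 : 𝓕 (⇑SG) = ⇑(FourierTransform.fourierCLE ℂ (SchwartzMap E3 ℂ) SG) := by
      rw [FourierTransform.fourierCLE_apply, SchwartzMap.fourier_coe]
    rw [step3, hSGdef, invFT, ContinuousLinearEquiv.apply_symm_apply, scaleS_apply,
      smul_smul, mul_inv_cancel₀ h2π.ne', one_smul]
  rw [show (fun p : E3 => ∫ x : E3, (Complex.exp (-((inner ℝ x p : ℝ) : ℂ) * Complex.I)
      * (starRingEnd ℂ) (F p)) * SG x) = fun p : E3 => (starRingEnd ℂ) (F p) * G p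
      from funext hFT]
  have hone : ((kgC : ℂ) * ((((2 * π : ℝ) ^ 3 : ℝ) : ℂ) * (kgC : ℂ))) = 1 := by
    exact_mod_cast congrArg (fun r : ℝ => (r : ℂ)) kgC_mul
  rw [hone, one_mul]



def Msol (m t σ : ℝ) : E3 → ℂ := fun p =>
  ((2 * relEnergy m p : ℝ) : ℂ)⁻¹ *
    Complex.exp (((-(σ * t) * relEnergy m p : ℝ) : ℂ) * Complex.I)

def Mder (m t σ : ℝ) : E3 → ℂ := fun p =>
  (-(σ : ℂ) * Complex.I / 2) *
    Complex.exp (((-(σ * t) * relEnergy m p : ℝ) : ℂ) * Complex.I)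

lemma htg_Msol_full {m : ℝ} (hm : 0 < m) (t σ : ℝ) :
    Function.HasTemperateGrowth (Msol m t σ) := htg_Msol hm (-(σ * t))

lemma htg_Mder_full {m : ℝ} (hm : 0 < m) (t σ : ℝ) :
    Function.HasTemperateGrowth (Mder m t σ) := htg_Mder hm (-(σ : ℂ) * Complex.I / 2) (-(σ * t))

def solProfile {m : ℝ} (hm : 0 < m) (t σ : ℝ) (ψ : SchwartzMap E3 ℂ) : SchwartzMap E3 ℂ :=
  SchwartzMap.bilinLeftCLM (ContinuousLinearMap.mul ℝ ℂ) (htg_Msol_full hm t σ) ψ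

lemma solProfile_apply {m : ℝ} (hm : 0 < m) (t σ : ℝ) (ψ : SchwartzMap E3 ℂ) (p : E3) :
    solProfile hm t σ ψ p = ψ p * Msol m t σ p := rfl

def derProfile {m : ℝ} (hm : 0 < m) (t σ : ℝ) (ψ : SchwartzMap E3 ℂ) : SchwartzMap E3 ℂ :=
  SchwartzMap.bilinLeftCLM (ContinuousLinearMap.mul ℝ ℂ) (htg_Mder_full hm t σ) ψ

lemma derProfile_apply {m : ℝ} (hm : 0 < m) (t σ : ℝ) (ψ : SchwartzMap E3 ℂ) (p : E3) :
    derProfile hm t σ ψ p = ψ p * Mder m t σ p := rfl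

lemma cont_relEnergy (m : ℝ) : Continuous (relEnergy m) :=
  Real.continuous_sqrt.comp ((continuous_norm.pow 2).add continuous_const)

lemma cont_integrand {m : ℝ} (hm : 0 < m) (σ t' : ℝ) (ψ : SchwartzMap E3 ℂ) (x : E3) :
    Continuous (fun p : E3 => ((2 * relEnergy m p : ℝ) : ℂ)⁻¹ *
      Complex.exp (Complex.I * (((inner ℝ x p : ℝ) : ℂ)
        - (σ : ℂ) * (t' : ℂ) * ((relEnergy m p : ℝ) : ℂ))) * ψ p) := by
  have hε := cont_relEnergy m
  have h1 : Continuous fun p : E3 => ((2 * relEnergy m p : ℝ) : ℂ) :=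
    Complex.continuous_ofReal.comp (continuous_const.mul hε)
  have h2 : Continuous fun p : E3 => ((2 * relEnergy m p : ℝ) : ℂ)⁻¹ := by
    refine h1.inv₀ fun p => ?_
    have : (0:ℝ) < 2 * relEnergy m p := by
      have := relEnergy_pos hm p; positivity
    exact_mod_cast Complex.ofReal_ne_zero.mpr this.ne'
  have h3 : Continuous fun p : E3 => (inner ℝ x p : ℝ) :=
    Continuous.inner continuous_const continuous_id
  have h4 : Continuous fun p : E3 => Complex.I * (((inner ℝ x p : ℝ) : ℂ)
      - (σ : ℂ) * (t' : ℂ) * ((relEnergy m p : ℝ) : ℂ)) :=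
    continuous_const.mul ((Complex.continuous_ofReal.comp h3).sub
      (continuous_const.mul (Complex.continuous_ofReal.comp hε)))
  exact (h2.mul (Complex.continuous_exp.comp h4)).mul ψ.continuous

lemma cont_integrand' {m : ℝ} (hm : 0 < m) (σ t' : ℝ) (ψ : SchwartzMap E3 ℂ) (x : E3) :
    Continuous (fun p : E3 => ((2 * relEnergy m p : ℝ) : ℂ)⁻¹ *
      ((-(Complex.I * (σ : ℂ) * ((relEnergy m p : ℝ) : ℂ))) *
        Complex.exp (Complex.I * (((inner ℝ x p : ℝ) : ℂ)
          - (σ : ℂ) * (t' : ℂ) * ((relEnergy m p : ℝ) : ℂ)))) * ψ p) := by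
  have hε := cont_relEnergy m
  have h1 : Continuous fun p : E3 => ((2 * relEnergy m p : ℝ) : ℂ) :=
    Complex.continuous_ofReal.comp (continuous_const.mul hε)
  have h2 : Continuous fun p : E3 => ((2 * relEnergy m p : ℝ) : ℂ)⁻¹ := by
    refine h1.inv₀ fun p => ?_
    have : (0:ℝ) < 2 * relEnergy m p := by
      have := relEnergy_pos hm p; positivity
    exact_mod_cast Complex.ofReal_ne_zero.mpr this.ne'
  have h3 : Continuous fun p : E3 => (inner ℝ x p : ℝ) :=
    Continuous.inner continuous_const continuous_id
  have h4 : Continuous fun p : E3 => Complex.I * (((inner ℝ x p : ℝ) : ℂ)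
      - (σ : ℂ) * (t' : ℂ) * ((relEnergy m p : ℝ) : ℂ)) :=
    continuous_const.mul ((Complex.continuous_ofReal.comp h3).sub
      (continuous_const.mul (Complex.continuous_ofReal.comp hε)))
  have h5 : Continuous fun p : E3 => -(Complex.I * (σ : ℂ) * ((relEnergy m p : ℝ) : ℂ)) :=
    (continuous_const.mul (Complex.continuous_ofReal.comp hε)).neg
  exact (h2.mul (h5.mul (Complex.continuous_exp.comp h4))).mul ψ.continuous

lemma norm_exp_I_mul (a b : ℝ) :
    ‖Complex.exp (Complex.I * ((a : ℂ) - (b : ℂ)))‖ = 1 := by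
  rw [Complex.norm_exp]
  simp

lemma norm_exp_I_mul' (σ t' ε r : ℝ) :
    ‖Complex.exp (Complex.I * ((r : ℂ) - (σ : ℂ) * (t' : ℂ) * (ε : ℂ)))‖ = 1 := by
  rw [show (σ : ℂ) * (t' : ℂ) * (ε : ℂ) = ((σ * t' * ε : ℝ) : ℂ) by push_cast; ring]
  exact norm_exp_I_mul r (σ * t' * ε)

lemma integrable_integrand {m : ℝ} (hm : 0 < m) (σ t' : ℝ) (ψ : SchwartzMap E3 ℂ) (x : E3) :
    Integrable (fun p : E3 => ((2 * relEnergy m p : ℝ) : ℂ)⁻¹ *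
      Complex.exp (Complex.I * (((inner ℝ x p : ℝ) : ℂ)
        - (σ : ℂ) * (t' : ℂ) * ((relEnergy m p : ℝ) : ℂ))) * ψ p) (volume : Measure E3) := by
  refine (((ψ.integrable (μ := volume)).norm.const_mul ((2*m)⁻¹)).mono'
    (cont_integrand hm σ t' ψ x).aestronglyMeasurable
    (Filter.Eventually.of_forall fun p => ?_))
  have hε := relEnergy_pos hm p
  have hεm := relEnergy_ge hm p
  rw [norm_mul, norm_mul]
  have h1 : ‖((2 * relEnergy m p : ℝ) : ℂ)⁻¹‖ = (2 * relEnergy m p)⁻¹ := by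
    rw [norm_inv, Complex.norm_real, Real.norm_eq_abs, abs_of_pos (by positivity)]
  rw [h1, norm_exp_I_mul' σ t' _ _, mul_one]
  have h2 : (2 * relEnergy m p)⁻¹ ≤ (2*m)⁻¹ := by
    apply inv_anti₀ (by positivity)
    linarith
  exact mul_le_mul_of_nonneg_right h2 (norm_nonneg _)

lemma exp_split {m : ℝ} (σ t : ℝ) (x p : E3) :
    Complex.exp (Complex.I * (((inner ℝ x p : ℝ) : ℂ)
      - (σ : ℂ) * (t : ℂ) * ((relEnergy m p : ℝ) : ℂ)))
    = Complex.exp (((inner ℝ x p : ℝ) : ℂ) * Complex.I) *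
        Complex.exp (((-(σ * t) * relEnergy m p : ℝ) : ℂ) * Complex.I) := by
  rw [← Complex.exp_add]
  congr 1
  push_cast
  ring

lemma sol_eq {m : ℝ} (hm : 0 < m) (σ t : ℝ) (ψ : SchwartzMap E3 ℂ) (x : E3) :
    kgSolution m σ ψ t x = (kgC : ℂ) *
      ∫ p : E3, Complex.exp (((inner ℝ x p : ℝ) : ℂ) * Complex.I) * (solProfile hm t σ ψ p) := by
  unfold kgSolution kgC
  congr 1
  refine congrArg _ (funext fun p => ?_)
  rw [solProfile_apply, exp_split σ t x p]
  simp only [Msol]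
  ring

lemma hasDerivAt_integrand {m : ℝ} (σ : ℝ) (ψ : SchwartzMap E3 ℂ) (x p : E3) (t' : ℝ) :
    HasDerivAt (fun s : ℝ => ((2 * relEnergy m p : ℝ) : ℂ)⁻¹ *
        Complex.exp (Complex.I * (((inner ℝ x p : ℝ) : ℂ)
          - (σ : ℂ) * (s : ℂ) * ((relEnergy m p : ℝ) : ℂ))) * ψ p)
      (((2 * relEnergy m p : ℝ) : ℂ)⁻¹ *
        ((-(Complex.I * (σ : ℂ) * ((relEnergy m p : ℝ) : ℂ))) *
          Complex.exp (Complex.I * (((inner ℝ x p : ℝ) : ℂ)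
            - (σ : ℂ) * (t' : ℂ) * ((relEnergy m p : ℝ) : ℂ)))) * ψ p) t' := by
  have h0 : HasDerivAt (fun s : ℝ => ((s : ℝ) : ℂ)) 1 t' := by
    simpa using (hasDerivAt_id t').ofReal_comp
  have h1 : HasDerivAt (fun s : ℝ => Complex.I * (((inner ℝ x p : ℝ) : ℂ)
      - (σ : ℂ) * (s : ℂ) * ((relEnergy m p : ℝ) : ℂ)))
      (-(Complex.I * (σ : ℂ) * ((relEnergy m p : ℝ) : ℂ))) t' := by
    have heq : (fun s : ℝ => Complex.I * (((inner ℝ x p : ℝ) : ℂ)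
        - (σ : ℂ) * (s : ℂ) * ((relEnergy m p : ℝ) : ℂ)))
        = fun s : ℝ => Complex.I * ((inner ℝ x p : ℝ) : ℂ)
          - (Complex.I * (σ : ℂ) * ((relEnergy m p : ℝ) : ℂ)) * ((s : ℝ) : ℂ) := by
      funext s; ring
    rw [heq]
    have h2 := (h0.const_mul (Complex.I * (σ : ℂ) * ((relEnergy m p : ℝ) : ℂ))).const_sub
      (Complex.I * ((inner ℝ x p : ℝ) : ℂ))
    simpa using h2
  have h3 := h1.cexp
  have h4 := (h3.const_mul (((2 * relEnergy m p : ℝ) : ℂ)⁻¹)).mul_const (ψ p)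
  exact h4.congr_deriv (by ring)

lemma deriv_sol {m : ℝ} (hm : 0 < m) (σ t : ℝ) (ψ : SchwartzMap E3 ℂ) (x : E3) :
    deriv (fun t' => kgSolution m σ ψ t' x) t = (kgC : ℂ) *
      ∫ p : E3, Complex.exp (((inner ℝ x p : ℝ) : ℂ) * Complex.I) * (derProfile hm t σ ψ p) := by
  have key := hasDerivAt_integral_of_dominated_loc_of_deriv_le (μ := (volume : Measure E3))
    (F := fun (t' : ℝ) (p : E3) => ((2 * relEnergy m p : ℝ) : ℂ)⁻¹ *
        Complex.exp (Complex.I * (((inner ℝ x p : ℝ) : ℂ)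
          - (σ : ℂ) * (t' : ℂ) * ((relEnergy m p : ℝ) : ℂ))) * ψ p)
    (F' := fun (t' : ℝ) (p : E3) => ((2 * relEnergy m p : ℝ) : ℂ)⁻¹ *
        ((-(Complex.I * (σ : ℂ) * ((relEnergy m p : ℝ) : ℂ))) *
          Complex.exp (Complex.I * (((inner ℝ x p : ℝ) : ℂ)
            - (σ : ℂ) * (t' : ℂ) * ((relEnergy m p : ℝ) : ℂ)))) * ψ p)
    (x₀ := t) (s := Metric.ball t 1) (bound := fun p => (|σ|/2 + 1) * ‖ψ p‖) (Metric.ball_mem_nhds t one_pos)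
    (Filter.Eventually.of_forall fun t' =>
      (cont_integrand hm σ t' ψ x).aestronglyMeasurable)
    (integrable_integrand hm σ t ψ x)
    ((cont_integrand' hm σ t ψ x).aestronglyMeasurable)
    (Filter.Eventually.of_forall fun p => fun t' _ => by
      have hε := relEnergy_pos hm p
      rw [norm_mul, norm_mul, norm_mul]
      have h1 : ‖((2 * relEnergy m p : ℝ) : ℂ)⁻¹‖ = (2 * relEnergy m p)⁻¹ := by
        rw [norm_inv, Complex.norm_real, Real.norm_eq_abs, abs_of_pos (by positivity)]
      have h2 : ‖-(Complex.I * (σ : ℂ) * ((relEnergy m p : ℝ) : ℂ))‖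
          = |σ| * relEnergy m p := by
        rw [norm_neg, norm_mul, norm_mul, Complex.norm_I, one_mul, Complex.norm_real,
          Complex.norm_real, Real.norm_eq_abs, Real.norm_eq_abs, abs_of_pos hε]
      rw [h1, h2, norm_exp_I_mul' σ t' _ _, mul_one]
      have h3 : (2 * relEnergy m p)⁻¹ * (|σ| * relEnergy m p) = |σ| / 2 := by
        field_simp
      rw [h3]
      have : |σ| / 2 ≤ |σ| / 2 + 1 := by linarith
      exact mul_le_mul_of_nonneg_right this (norm_nonneg _))
    (((ψ.integrable (μ := volume)).norm.const_mul (|σ|/2 + 1)))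
    (Filter.Eventually.of_forall fun p => fun t' _ => hasDerivAt_integrand σ ψ x p t')
  have hfun : (fun t' => kgSolution m σ ψ t' x)
      = fun t' : ℝ => (kgC : ℂ) * ∫ p : E3, ((2 * relEnergy m p : ℝ) : ℂ)⁻¹ *
        Complex.exp (Complex.I * (((inner ℝ x p : ℝ) : ℂ)
          - (σ : ℂ) * (t' : ℂ) * ((relEnergy m p : ℝ) : ℂ))) * ψ p := by
    funext t'
    unfold kgSolution kgC
    rfl
  rw [hfun, (key.2.const_mul ((kgC : ℂ))).deriv]
  congr 1
  refine congrArg _ (funext fun p => ?_)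
  beta_reduce
  have hε := relEnergy_pos hm p
  have h2εne : ((2 * relEnergy m p : ℝ) : ℂ) ≠ 0 := by
    exact_mod_cast Complex.ofReal_ne_zero.mpr (by positivity : (0:ℝ) < 2 * relEnergy m p).ne'
  rw [exp_split σ t x p, derProfile_apply]
  simp only [Mder]
  have hcast : ((2 * relEnergy m p : ℝ) : ℂ) = 2 * ((relEnergy m p : ℝ) : ℂ) := by
    push_cast; ring
  rw [hcast] at h2εne ⊢
  have hεne : ((relEnergy m p : ℝ) : ℂ) ≠ 0 := by
    exact_mod_cast Complex.ofReal_ne_zero.mpr hε.ne'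
  field_simp


lemma conj_exp_ofReal_mul_I (θ : ℝ) :
    (starRingEnd ℂ) (Complex.exp ((θ : ℂ) * Complex.I))
      = Complex.exp (((-θ : ℝ) : ℂ) * Complex.I) := by
  rw [← Complex.exp_conj]
  congr 1
  simp only [map_mul, Complex.conj_ofReal, Complex.conj_I]
  push_cast
  ring

lemma profile_identity {m : ℝ} (hm : 0 < m) (t : ℝ) (φt ψt : SchwartzMap E3 ℂ) (p : E3) :
    (starRingEnd ℂ) (solProfile hm t 1 φt p) * derProfile hm t (-1) ψt p
      = (starRingEnd ℂ) (derProfile hm t 1 φt p) * solProfile hm t (-1) ψt p := by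
  rw [solProfile_apply, derProfile_apply, solProfile_apply, derProfile_apply]
  simp only [Msol, Mder]
  simp only [map_mul, map_inv₀, Complex.conj_ofReal, conj_exp_ofReal_mul_I, map_div₀,
    map_neg, map_one, Complex.conj_I, map_ofNat]
  push_cast
  ring_nf

/-- Positive-frequency and negative-frequency solutions of the Klein–Gordon equation are
mutually orthogonal with respect to the Klein–Gordon pairing at every time. -/
theorem kgPairing_opposite_frequency_orthogonal
    (m : ℝ) (hm : 0 < m)
    (φt ψt : SchwartzMap (EuclideanSpace ℝ (Fin 3)) ℂ) :
    ∀ t : ℝ, kgPairing (kgSolution m 1 φt) (kgSolution m (-1) ψt) t = 0 := by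
  intro t
  set F₁ := solProfile hm t 1 φt with hF₁
  set G₁ := derProfile hm t (-1) ψt with hG₁
  set F₂ := derProfile hm t 1 φt with hF₂
  set G₂ := solProfile hm t (-1) ψt with hG₂
  set K : ℂ := (((2 * π : ℝ) ^ 3 : ℝ) : ℂ) * (kgC : ℂ) with hK
  -- pointwise rewriting of the integrand
  have hint_eq : (fun x : E3 => starRingEnd ℂ (kgSolution m 1 φt t x)
        * deriv (fun t' => kgSolution m (-1) ψt t' x) t
      - starRingEnd ℂ (deriv (fun t' => kgSolution m 1 φt t' x) t)
        * kgSolution m (-1) ψt t x)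
      = fun x : E3 =>
        (starRingEnd ℂ) ((kgC : ℂ) * ∫ p : E3,
            Complex.exp (((inner ℝ x p : ℝ) : ℂ) * Complex.I) * F₁ p)
          * ((kgC : ℂ) * ∫ p : E3, Complex.exp (((inner ℝ x p : ℝ) : ℂ) * Complex.I) * G₁ p)
        - (starRingEnd ℂ) ((kgC : ℂ) * ∫ p : E3,
            Complex.exp (((inner ℝ x p : ℝ) : ℂ) * Complex.I) * F₂ p)
          * ((kgC : ℂ) * ∫ p : E3, Complex.exp (((inner ℝ x p : ℝ) : ℂ) * Complex.I) * G₂ p) := by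
    funext x
    rw [sol_eq hm 1 t φt x, sol_eq hm (-1) t ψt x, deriv_sol hm 1 t φt x,
      deriv_sol hm (-1) t ψt x]
  -- integrability of the two products
  have hprod : ∀ (F G : SchwartzMap E3 ℂ), Integrable (fun x : E3 =>
      (starRingEnd ℂ) ((kgC : ℂ) * ∫ p : E3,
          Complex.exp (((inner ℝ x p : ℝ) : ℂ) * Complex.I) * F p)
        * ((kgC : ℂ) * ∫ p : E3,
          Complex.exp (((inner ℝ x p : ℝ) : ℂ) * Complex.I) * G p)) (volume : Measure E3) := by
    intro F G
    have hrepF : ∀ x : E3, (kgC : ℂ) * ∫ p : E3,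
        Complex.exp (((inner ℝ x p : ℝ) : ℂ) * Complex.I) * F p = K * invFT F x := fun x => by
      rw [rep]; ring
    have hrepG : ∀ x : E3, (kgC : ℂ) * ∫ p : E3,
        Complex.exp (((inner ℝ x p : ℝ) : ℂ) * Complex.I) * G p = K * invFT G x := fun x => by
      rw [rep]; ring
    have heq : (fun x : E3 =>
        (starRingEnd ℂ) ((kgC : ℂ) * ∫ p : E3,
            Complex.exp (((inner ℝ x p : ℝ) : ℂ) * Complex.I) * F p)
          * ((kgC : ℂ) * ∫ p : E3, Complex.exp (((inner ℝ x p : ℝ) : ℂ) * Complex.I) * G p))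
        = fun x : E3 => (starRingEnd ℂ) (K * invFT F x) * (K * invFT G x) := by
      funext x; rw [hrepF x, hrepG x]
    rw [heq]
    refine Integrable.bdd_mul (c := ‖K‖ * (SchwartzMap.seminorm ℝ 0 0) (invFT F)) (((invFT G).integrable (μ := volume)).const_mul K) ?_ ?_
    · exact (continuous_star.comp
        (continuous_const.mul (invFT F).continuous)).aestronglyMeasurable
    · refine Filter.Eventually.of_forall fun x => ?_
      rw [RCLike.norm_conj, norm_mul]
      refine mul_le_mul_of_nonneg_left ?_ (norm_nonneg K)
      simpa using SchwartzMap.le_seminorm ℝ 0 0 (invFT F) x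
  -- put everything together
  rw [kgPairing, hint_eq, integral_sub (hprod F₁ G₁) (hprod F₂ G₂),
    keyFubini F₁ G₁, keyFubini F₂ G₂]
  have hpt : (∫ p : E3, (starRingEnd ℂ) (F₁ p) * G₁ p)
      = ∫ p : E3, (starRingEnd ℂ) (F₂ p) * G₂ p :=
    congrArg _ (funext fun p => profile_identity hm t φt ψt p)
  rw [hpt, sub_self, mul_zero]

end
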